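/- Let q = p^m, p an odd prime, N | q−1, θ = α^N, D = {θ^i : 0 ≤ i < n_1} with n_1 = (q−1)/N, N_1 = gcd(N,(q−1)/(p−1)), and let H be an r-dimensional F_p-subspace of F_q. Then the number of codeword positions 0 ≤ i < n_1 with Tr(aθ^i) = 0 for all a ∈ H equals n_1/p^r + (N_1/(p^r N)) Σ_{i=0}^{N_1−1} |H ∩ C_i^{(N_1,q)}| η_i^{(N_1,q)}. -/

import Mathlib

open scoped Classical

/-- The canonical additive character `ψ(x) = ζ_p^{Tr(x)}` of `F_q`. -/
noncomputable def psi (p : ℕ) {F : Type} [Field F] [Fintype F] [Algebra (ZMod p) F]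
    (x : F) : ℂ :=
  Complex.exp (2 * Real.pi * Complex.I * ((Algebra.trace (ZMod p) F x).val : ℂ) / p)

/-- The `i`-th cyclotomic class `C_i^{(e,q)} = α^i ⟨α^e⟩` of order `e` in `F_q`. -/
noncomputable def cyc {F : Type} [Field F] [Fintype F] (α : F) (e i : ℕ) : Finset F :=
  (Finset.range ((Fintype.card F - 1) / e)).image (fun j => α ^ i * (α ^ e) ^ j)

/-- The Gauss period `η_i^{(e,q)} = Σ_{x ∈ C_i^{(e,q)}} ψ(x)`. -/
noncomputable def gp (p : ℕ) {F : Type} [Field F] [Fintype F] [Algebra (ZMod p) F]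
    (α : F) (e i : ℕ) : ℂ :=
  ∑ x ∈ cyc α e i, psi p x

lemma cexp_mod (p n : ℕ) (hp : (p:ℂ) ≠ 0) :
    Complex.exp (2 * Real.pi * Complex.I * ((n % p : ℕ) : ℂ) / p)
      = Complex.exp (2 * Real.pi * Complex.I * (n : ℂ) / p) := by
  conv_rhs => rw [← Nat.div_add_mod n p]
  have h1 : Complex.exp (((n / p : ℕ) : ℂ) * (2 * Real.pi * Complex.I)) = 1 := by
    simpa using Complex.exp_int_mul_two_pi_mul_I ((n/p : ℕ) : ℤ)
  have : 2 * (Real.pi:ℂ) * Complex.I * ((p * (n / p) + n % p : ℕ) : ℂ) / p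
      = ((n / p : ℕ):ℂ) * (2 * Real.pi * Complex.I) + 2 * Real.pi * Complex.I * ((n % p : ℕ):ℂ) / p := by
    push_cast
    field_simp
  rw [this, Complex.exp_add, h1, one_mul]

variable (p : ℕ) [Fact p.Prime] {F : Type} [Field F] [Fintype F] [Algebra (ZMod p) F]

lemma psi_mul_psi (x y : F) : psi p x * psi p y = psi p (x + y) := by
  haveI : NeZero p := ⟨(Fact.out : p.Prime).ne_zero⟩
  have hp : (p:ℂ) ≠ 0 := Nat.cast_ne_zero.mpr (Fact.out : p.Prime).ne_zero
  unfold psi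
  rw [map_add, ZMod.val_add, cexp_mod p _ hp, ← Complex.exp_add]
  congr 1
  push_cast
  field_simp

lemma psi_zero : psi p (0 : F) = 1 := by
  haveI : NeZero p := ⟨(Fact.out : p.Prime).ne_zero⟩
  unfold psi
  simp

lemma psi_ne_one {x : F} (h : Algebra.trace (ZMod p) F x ≠ 0) : psi p x ≠ 1 := by
  haveI : NeZero p := ⟨(Fact.out : p.Prime).ne_zero⟩
  have hp1 : 1 < p := (Fact.out : p.Prime).one_lt
  intro hx
  unfold psi at hx
  rw [Complex.exp_eq_one_iff] at hx
  obtain ⟨k, hk⟩ := hx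
  apply h
  set v := (Algebra.trace (ZMod p) F x).val with hv
  have hpC : (p:ℂ) ≠ 0 := Nat.cast_ne_zero.mpr (by omega)
  have h2 : (2 * (Real.pi:ℂ) * Complex.I) ≠ 0 := by
    simp [Real.pi_ne_zero, Complex.I_ne_zero]
  have hvk : (v:ℂ) = (k:ℂ) * p := by
    field_simp at hk
    linear_combination hk
  have hR : (v:ℝ) = (k:ℝ) * p := by
    have := congrArg Complex.re hvk
    simpa using this
  have hZ : (v:ℤ) = k * p := by exact_mod_cast hR
  have hvlt : (v:ℤ) < p := by exact_mod_cast ZMod.val_lt _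
  have hv0 : (0:ℤ) ≤ v := Int.ofNat_nonneg v
  have hp2 : (2:ℤ) ≤ p := by exact_mod_cast hp1
  have hk0 : 0 ≤ k := by
    by_contra hneg
    push_neg at hneg
    have : k * (p:ℤ) ≤ -1 * p := mul_le_mul_of_nonneg_right (by omega) (by linarith)
    linarith
  have hk1 : k < 1 := by
    by_contra h1k
    push_neg at h1k
    have : 1 * (p:ℤ) ≤ k * p := mul_le_mul_of_nonneg_right h1k (by linarith)
    linarith
  have : k = 0 := by omega
  rw [this] at hZ
  simp at hZ
  exact (ZMod.val_eq_zero _).mp hZ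

lemma count_mod_range (n k v : ℕ) (hn : 0 < n) (hv : v < n) :
    ((Finset.range (k * n)).filter (fun u => u % n = v)).card = k := by
  have himg : (Finset.range (k * n)).filter (fun u => u % n = v)
      = (Finset.range k).image (fun t => v + n * t) := by
    ext u
    simp only [Finset.mem_filter, Finset.mem_range, Finset.mem_image]
    constructor
    · rintro ⟨hlt, hmod⟩
      refine ⟨u / n, ?_, ?_⟩
      · by_contra hge
        push_neg at hge
        have h1 : k * n ≤ u / n * n := Nat.mul_le_mul_right n hge
        have h2 : u / n * n ≤ u := Nat.div_mul_le_self u n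
        omega
      · have := Nat.div_add_mod u n
        omega
    · rintro ⟨t, ht, rfl⟩
      have h1 : n * (t+1) ≤ n * k := Nat.mul_le_mul_left n ht
      have h2 : n * (t+1) = n * t + n := by ring
      have h3 : n * k = k * n := Nat.mul_comm n k
      refine ⟨by omega, ?_⟩
      show (v + n * t) % n = v
      rw [Nat.add_mul_mod_self_left]
      exact Nat.mod_eq_of_lt hv
  rw [himg, Finset.card_image_of_injective _ (fun a b hab =>
    Nat.eq_of_mul_eq_mul_left hn (by omega)), Finset.card_range]

/-- Inner count: for fixed `u`, the number of `i < Q/N` with `s*u + N*i ≡ c [MOD Q]`. -/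
lemma inner_count (Q s N : ℕ) (hQ : 0 < Q) (hNQ : N ∣ Q) (hN0 : 0 < N) (u c : ℕ) :
    ((Finset.range (Q / N)).filter (fun i => (s * u + N * i) % Q = c % Q)).card
      = if (s * u) % N = c % N then 1 else 0 := by
  have hNQ' : N * (Q / N) = Q := Nat.mul_div_cancel' hNQ
  by_cases h : (s * u) % N = c % N
  · rw [if_pos h]
    have hle : s * u % Q ≤ c % Q + Q := by
      have := Nat.mod_lt (s*u) hQ; omega
    set w := (c % Q + Q - s * u % Q) % Q with hw
    have hwQ : w < Q := Nat.mod_lt _ hQ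
    have hdvd1 : N ∣ (c % Q + Q - s * u % Q) := by
      have e1 : (c % Q) % N = c % N := Nat.mod_mod_of_dvd c hNQ
      have e2 : (s * u % Q) % N = (s * u) % N := Nat.mod_mod_of_dvd _ hNQ
      have hmq : (s * u % Q) ≡ (c % Q + Q) [MOD N] := by
        unfold Nat.ModEq
        have e3 : (c % Q + Q) % N = (c % Q) % N := by
          obtain ⟨t, rfl⟩ := hNQ
          simp [Nat.add_mul_mod_self_left]
        omega
      exact (Nat.modEq_iff_dvd' hle).mp hmq
    have hdvdw : N ∣ w := (Nat.dvd_mod_iff hNQ).mpr hdvd1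
    set i₀ := w / N with hi₀
    have hNi₀ : N * i₀ = w := Nat.mul_div_cancel' hdvdw
    have hi₀lt : i₀ < Q / N := Nat.div_lt_div_of_lt_of_dvd hNQ hwQ
    have hsol : (s * u + N * i₀) % Q = c % Q := by
      rw [hNi₀]
      have h1 : (s * u + w) ≡ (s * u % Q + (c % Q + Q - s * u % Q)) [MOD Q] :=
        Nat.ModEq.add (Nat.mod_modEq _ _).symm (Nat.mod_modEq _ _)
      have h2 : s * u % Q + (c % Q + Q - s * u % Q) = c % Q + Q := by omega
      have h3 : (c % Q + Q) ≡ c [MOD Q] := by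
        unfold Nat.ModEq
        simp [Nat.add_mod_right, Nat.mod_mod_of_dvd]
      exact (h1.trans (by rw [h2])).trans h3
    have huniq : ∀ i, i < Q/N → (s * u + N * i) % Q = c % Q → i = i₀ := by
      intro i hi hieq
      have hlt1 : N * i < Q := by
        have := (Nat.mul_lt_mul_left hN0).mpr hi
        omega
      have hlt2 : N * i₀ < Q := by rw [hNi₀]; exact hwQ
      have hthis : (s*u + N*i) ≡ (s*u + N*i₀) [MOD Q] := by
        unfold Nat.ModEq; rw [hieq, hsol]
      have hmod : (N * i) % Q = (N * i₀) % Q := Nat.ModEq.add_left_cancel' (s*u) hthis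
      rw [Nat.mod_eq_of_lt hlt1, Nat.mod_eq_of_lt hlt2] at hmod
      exact Nat.eq_of_mul_eq_mul_left hN0 hmod
    rw [Finset.card_eq_one]
    refine ⟨i₀, ?_⟩
    ext i
    simp only [Finset.mem_filter, Finset.mem_range, Finset.mem_singleton]
    constructor
    · rintro ⟨h1, h2⟩; exact huniq i h1 h2
    · rintro rfl; exact ⟨hi₀lt, hsol⟩
  · rw [if_neg h]
    rw [Finset.card_eq_zero, Finset.filter_eq_empty_iff]
    intro i _
    intro hcon
    apply h
    have h5 : (s * u + N * i) ≡ c [MOD N] := Nat.ModEq.of_dvd hNQ hcon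
    have h6 : (s * u + N * i) % N = (s * u) % N := Nat.add_mul_mod_self_left _ _ _
    unfold Nat.ModEq at h5
    omega

/-- The key counting lemma: fibers of `(u,i) ↦ s*u + N*i mod Q` over multiples of `N₁`. -/
lemma count_lemma (p Q s N N₁ : ℕ) (hp : 2 ≤ p) (hQ : 0 < Q) (hs : Q = s * (p-1))
    (hN : N ∣ Q) (hN0 : 0 < N) (hN₁ : N₁ = Nat.gcd N s) (c : ℕ) (hc : N₁ ∣ c) :
    (((Finset.range (p-1) ×ˢ Finset.range (Q/N)).filter
        (fun ui => (s * ui.1 + N * ui.2) % Q = c % Q)).card) * N = (p-1) * N₁ := by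
  have hs0 : 0 < s := by
    rcases Nat.eq_zero_or_pos s with h | h
    · rw [h] at hs; simp at hs; omega
    · exact h
  have hN₁0 : 0 < N₁ := by rw [hN₁]; exact Nat.gcd_pos_of_pos_left s hN0
  have hN₁N : N₁ ∣ N := hN₁ ▸ Nat.gcd_dvd_left N s
  have hN₁s : N₁ ∣ s := hN₁ ▸ Nat.gcd_dvd_right N s
  set N' := N / N₁ with hN'
  set s' := s / N₁ with hs'
  set c' := c / N₁ with hc'
  have hNfac : N = N₁ * N' := (Nat.mul_div_cancel' hN₁N).symm
  have hsfac : s = N₁ * s' := (Nat.mul_div_cancel' hN₁s).symm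
  have hcfac : c = N₁ * c' := (Nat.mul_div_cancel' hc).symm
  have hN'0 : 0 < N' := by
    rcases Nat.eq_zero_or_pos N' with h | h
    · rw [h, Nat.mul_zero] at hNfac; omega
    · exact h
  have hcop : Nat.Coprime s' N' := by
    have h0 : 0 < Nat.gcd N s := by rw [← hN₁]; exact hN₁0
    have := Nat.coprime_div_gcd_div_gcd h0
    rw [← hN₁] at this
    exact Nat.coprime_comm.mp this
  have hN'p : N' ∣ (p - 1) := by
    have h1 : N ∣ s * (p-1) := hs ▸ hN
    have h2 : N₁ * N' ∣ (N₁ * s') * (p-1) := by rw [← hNfac, ← hsfac]; exact h1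
    have h3 : N' ∣ s' * (p-1) := by
      rcases h2 with ⟨t, ht⟩
      exact ⟨t, Nat.eq_of_mul_eq_mul_left hN₁0
        (by rw [← mul_assoc, ← mul_assoc]; exact ht)⟩
    exact Nat.Coprime.dvd_of_dvd_mul_left hcop.symm h3
  have step1 : (((Finset.range (p-1) ×ˢ Finset.range (Q/N)).filter
        (fun ui => (s * ui.1 + N * ui.2) % Q = c % Q)).card)
      = ((Finset.range (p-1)).filter (fun u => (s*u) % N = c % N)).card := by
    classical
    rw [Finset.card_filter, Finset.card_filter, Finset.sum_product]
    apply Finset.sum_congr rfl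
    intro u _
    rw [← Finset.card_filter, inner_count Q s N hQ hN hN0 u c]
  rw [step1]
  haveI : NeZero N' := ⟨hN'0.ne'⟩
  have hunit : IsUnit (s' : ZMod N') := (ZMod.unitOfCoprime s' hcop).isUnit
  set z : ZMod N' := ((hunit.unit⁻¹ : (ZMod N')ˣ) : ZMod N') * (c' : ZMod N') with hz
  set u₀ := z.val with hu₀
  have hu₀lt : u₀ < N' := ZMod.val_lt z
  have hcond : ∀ u : ℕ, ((s*u) % N = c % N ↔ u % N' = u₀) := by
    intro u
    have e1 : (s*u) % N = c % N ↔ s' * u ≡ c' [MOD N'] := by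
      constructor
      · intro h
        refine Nat.ModEq.mul_left_cancel' (c := N₁) hN₁0.ne' ?_
        show N₁ * (s' * u) ≡ N₁ * c' [MOD N₁ * N']
        unfold Nat.ModEq
        rw [← mul_assoc, ← hsfac, ← hcfac, ← hNfac]
        exact h
      · intro h
        have h2 := Nat.ModEq.mul_left' (c := N₁) h
        unfold Nat.ModEq at h2
        rw [← mul_assoc, ← hsfac, ← hcfac, ← hNfac] at h2
        exact h2
    have e2 : s' * u ≡ c' [MOD N'] ↔ (s' : ZMod N') * (u : ℕ) = (c' : ZMod N') := by
      rw [← ZMod.natCast_eq_natCast_iff]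
      push_cast
      rfl
    have hSU : ((hunit.unit : (ZMod N')ˣ) : ZMod N') = (s' : ZMod N') :=
      IsUnit.unit_spec hunit
    have hinv : ((hunit.unit⁻¹ : (ZMod N')ˣ) : ZMod N') * (s' : ZMod N') = 1 := by
      have h0 := Units.inv_mul hunit.unit
      rwa [hSU] at h0
    have hinv2 : (s' : ZMod N') * ((hunit.unit⁻¹ : (ZMod N')ˣ) : ZMod N') = 1 := by
      have h0 := Units.mul_inv hunit.unit
      rwa [hSU] at h0
    have e3 : (s' : ZMod N') * (u : ℕ) = (c' : ZMod N') ↔ ((u:ℕ) : ZMod N') = z := by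
      constructor
      · intro h
        calc ((u:ℕ) : ZMod N')
            = (((hunit.unit⁻¹ : (ZMod N')ˣ) : ZMod N') * (s' : ZMod N')) * (u:ℕ) := by
              rw [hinv, one_mul]
          _ = ((hunit.unit⁻¹ : (ZMod N')ˣ) : ZMod N') * ((s' : ZMod N') * (u:ℕ)) :=
              mul_assoc _ _ _
          _ = ((hunit.unit⁻¹ : (ZMod N')ˣ) : ZMod N') * (c' : ZMod N') :=
              congrArg (fun t => ((hunit.unit⁻¹ : (ZMod N')ˣ) : ZMod N') * t) h
          _ = z := hz.symm
      · intro h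
        calc (s' : ZMod N') * (u:ℕ)
            = (s' : ZMod N') * (((hunit.unit⁻¹ : (ZMod N')ˣ) : ZMod N') * (c' : ZMod N')) :=
              congrArg (fun t => (s' : ZMod N') * t) (h.trans hz)
          _ = ((s' : ZMod N') * ((hunit.unit⁻¹ : (ZMod N')ˣ) : ZMod N')) * (c' : ZMod N') :=
              (mul_assoc _ _ _).symm
          _ = (c' : ZMod N') := by rw [hinv2, one_mul]
    have e4 : ((u:ℕ) : ZMod N') = z ↔ u % N' = u₀ := by
      rw [← ZMod.natCast_mod u N', show z = ((u₀ : ℕ) : ZMod N') by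
        rw [hu₀, ZMod.natCast_val, ZMod.cast_id]]
      rw [ZMod.natCast_eq_natCast_iff', Nat.mod_mod_of_dvd _ dvd_rfl,
        Nat.mod_eq_of_lt hu₀lt]
    rw [e1, e2, e3, e4]
  have hfilter : (Finset.range (p-1)).filter (fun u => (s*u) % N = c % N)
      = (Finset.range (p-1)).filter (fun u => u % N' = u₀) := by
    apply Finset.filter_congr
    intro u _
    simp only [hcond u]
  rw [hfilter]
  obtain ⟨k, hk⟩ := hN'p
  rw [hk, mul_comm N' k, count_mod_range N' k u₀ hN'0 hu₀lt]
  rw [hNfac]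
  ring
section Main

variable (p m N N₁ n₁ : ℕ) [Fact p.Prime]
    {F : Type} [Field F] [Fintype F] [Algebra (ZMod p) F]

/-- The character sum over a subspace. -/
lemma charSum (H : Submodule (ZMod p) F) (r : ℕ)
    (hH : Module.finrank (ZMod p) ↥H = r) (x : F) :
    ∑ a ∈ Finset.univ.filter (fun t : F => t ∈ H), psi p (a * x)
      = if (∀ a ∈ H, Algebra.trace (ZMod p) F (a * x) = 0) then ((p:ℂ))^r else 0 := by
  classical
  by_cases h : ∀ a ∈ H, Algebra.trace (ZMod p) F (a * x) = 0
  · rw [if_pos h]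
    have hone : ∀ a ∈ Finset.univ.filter (fun t : F => t ∈ H), psi p (a * x) = 1 := by
      intro a ha
      rw [Finset.mem_filter] at ha
      have := h a ha.2
      unfold psi
      rw [this]
      simp
    rw [Finset.sum_congr rfl hone, Finset.sum_const, nsmul_eq_mul, mul_one]
    have hcard : (Finset.univ.filter (fun t : F => t ∈ H)).card = p ^ r := by
      have h1 : (Finset.univ.filter (fun t : F => t ∈ H)).card
          = Fintype.card {t : F // t ∈ H} := (Fintype.card_subtype _).symm
      rw [h1]
      have h2 : Fintype.card {t : F // t ∈ H} = Fintype.card (ZMod p) ^ Module.finrank (ZMod p) ↥H :=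
        Module.card_eq_pow_finrank
      rw [h2, ZMod.card, hH]
    rw [hcard]
    push_cast
    ring
  · rw [if_neg h]
    push_neg at h
    obtain ⟨a₀, ha₀H, ha₀⟩ := h
    set S := ∑ a ∈ Finset.univ.filter (fun t : F => t ∈ H), psi p (a * x) with hS
    have hshift : psi p (a₀ * x) * S = S := by
      rw [hS, Finset.mul_sum]
      have h1 : ∀ a ∈ Finset.univ.filter (fun t : F => t ∈ H),
          psi p (a₀ * x) * psi p (a * x) = psi p ((a₀ + a) * x) := by
        intro a _
        rw [psi_mul_psi, ← add_mul]
      rw [Finset.sum_congr rfl h1]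
      apply Finset.sum_nbij' (fun a => a₀ + a) (fun b => b - a₀)
      · intro a ha
        rw [Finset.mem_filter] at ha ⊢
        exact ⟨Finset.mem_univ _, H.add_mem ha₀H ha.2⟩
      · intro b hb
        rw [Finset.mem_filter] at hb ⊢
        exact ⟨Finset.mem_univ _, H.sub_mem hb.2 ha₀H⟩
      · intro a _; ring
      · intro b _; ring
      · intro a _; rfl
    have hne : psi p (a₀ * x) ≠ 1 := psi_ne_one p ha₀
    have := hshift
    rw [← sub_eq_zero] at this
    have h2 : (psi p (a₀ * x) - 1) * S = 0 := by linear_combination this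
    rcases mul_eq_zero.mp h2 with h3 | h3
    · exact absurd (by linear_combination h3) hne
    · exact h3

end Main
/-- For an `r`-dimensional `F_p`-subspace `H` of `F_q`, the number of positions
`0 ≤ i < n₁` with `Tr(aθ^i) = 0` for all `a ∈ H` equals
`n₁/p^r + (N₁/(p^r N)) Σ_i |H ∩ C_i^{(N₁,q)}| η_i^{(N₁,q)}`. -/
theorem stmt18 (p m N N₁ n₁ : ℕ) [Fact p.Prime] (hp : Odd p)
    (F : Type) [Field F] [Fintype F] [Algebra (ZMod p) F]
    (hq : Fintype.card F = p ^ m)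
    (α : F) (hα : orderOf α = p ^ m - 1)
    (hN : N ∣ p ^ m - 1) (hN0 : 0 < N)
    (hn₁ : n₁ = (p ^ m - 1) / N)
    (hN₁ : N₁ = Nat.gcd N ((p ^ m - 1) / (p - 1)))
    (H : Submodule (ZMod p) F) (r : ℕ)
    (hH : Module.finrank (ZMod p) ↥H = r) :
    (((Finset.range n₁).filter
        (fun i => ∀ a ∈ H, Algebra.trace (ZMod p) F (a * (α ^ N) ^ i) = 0)).card : ℂ)
      = (n₁ : ℂ) / p ^ r + ((N₁ : ℂ) / (p ^ r * N)) *
          ∑ i ∈ Finset.range N₁,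
            ((Finset.univ.filter (fun x : F => x ∈ H ∧ x ∈ cyc α N₁ i)).card : ℂ)
              * gp p α N₁ i := by
  classical
  have hprime : p.Prime := Fact.out
  have hp3 : 3 ≤ p := by
    rcases hp with ⟨k, hk⟩
    have := hprime.two_le
    omega
  set Q : ℕ := p ^ m - 1 with hQdef
  have hm : m ≠ 0 := by
    intro h0
    rw [h0, pow_zero] at hq
    exact absurd hq (by have := Fintype.one_lt_card (α := F); omega)
  have hpm : p ≤ p ^ m := Nat.le_self_pow hm p
  have hQ0 : 0 < Q := by
    have : 2 ≤ p ^ m := le_trans (by omega) hpm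
    omega
  have hFcard : Fintype.card F = Q + 1 := by
    rw [hq]; omega
  have hα0 : α ≠ 0 := by
    intro h0
    have h1 : α ^ Q = 1 := by rw [← hα]; exact pow_orderOf_eq_one α
    rw [h0, zero_pow hQ0.ne'] at h1
    exact zero_ne_one h1
  have hp1Q : (p - 1) ∣ Q := by
    have := Nat.sub_dvd_pow_sub_pow p 1 m
    simpa using this
  set s : ℕ := Q / (p - 1) with hsdef
  have hsQ : Q = s * (p - 1) := (Nat.div_mul_cancel hp1Q).symm
  have hs0 : 0 < s := by
    rcases Nat.eq_zero_or_pos s with h | h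
    · rw [h, zero_mul] at hsQ; omega
    · exact h
  have hN₁' : N₁ = Nat.gcd N s := hN₁
  have hNQ : N ∣ Q := hN
  have hN₁N : N₁ ∣ N := hN₁' ▸ Nat.gcd_dvd_left N s
  have hN₁s : N₁ ∣ s := hN₁' ▸ Nat.gcd_dvd_right N s
  have hN₁Q : N₁ ∣ Q := hN₁N.trans hNQ
  have hN₁0 : 0 < N₁ := hN₁' ▸ Nat.gcd_pos_of_pos_left s hN0
  have hn₁Q : n₁ = Q / N := hn₁
  have hn₁0 : 0 < n₁ := by
    rw [hn₁Q]
    exact Nat.div_pos (Nat.le_of_dvd hQ0 hNQ) hN0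
  -- order facts
  have hordd : ∀ d : ℕ, d ∣ Q → 0 < d → orderOf (α ^ d) = Q / d := by
    intro d hd hd0
    rw [orderOf_pow_of_dvd hd0.ne' (hα.symm ▸ hd), hα]
  have hpe : ∀ A B : ℕ, α ^ A = α ^ B ↔ A % Q = B % Q := by
    intro A B
    have hord : orderOf (Units.mk0 α hα0) = Q := by
      rw [← orderOf_units]
      simpa using hα
    have hu := pow_eq_pow_iff_modEq (x := Units.mk0 α hα0) (n := A) (m := B)
    rw [hord] at hu
    constructor
    · intro h
      exact hu.mp (Units.ext (by simpa using h))
    · intro h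
      have h2 := hu.mpr h
      simpa using congrArg Units.val h2
  -- logarithm
  have hlog : ∀ a : F, a ≠ 0 → ∃ t, t < Q ∧ a = α ^ t := by
    intro a ha
    set A : Finset F := (Finset.range Q).image (fun t => α ^ t) with hA
    have hinjA : Set.InjOn (fun t => α ^ t) (Finset.range Q) := by
      intro t ht t' ht' h
      simp only [Finset.coe_range, Set.mem_Iio] at ht ht'
      have h2 := (hpe t t').mp h
      rwa [Nat.mod_eq_of_lt ht, Nat.mod_eq_of_lt ht'] at h2
    have hcardA : A.card = Q := by
      rw [hA, Finset.card_image_of_injOn hinjA, Finset.card_range]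
    have hsubA : A ⊆ Finset.univ \ {0} := by
      intro x hx
      rw [hA, Finset.mem_image] at hx
      obtain ⟨t, _, rfl⟩ := hx
      simp [pow_ne_zero _ hα0]
    have hcardU : (Finset.univ \ {0} : Finset F).card = Q := by
      rw [Finset.card_sdiff_of_subset (by simp), Finset.card_univ, hFcard]
      simp
    have hAeq : A = Finset.univ \ {0} :=
      Finset.eq_of_subset_of_card_le hsubA (by omega)
    have hmemA : a ∈ A := by rw [hAeq]; simp [ha]
    rw [hA, Finset.mem_image] at hmemA
    obtain ⟨t, ht, hta⟩ := hmemA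
    exact ⟨t, Finset.mem_range.mp ht, hta.symm⟩
  -- cyclotomic class basics
  have hcyc : ∀ e i : ℕ, cyc α e i = (Finset.range (Q/e)).image (fun j => α ^ i * (α ^ e) ^ j) := by
    intro e i
    unfold cyc
    rw [hq]
  have hcycform : ∀ e i j : ℕ, α ^ i * (α ^ e) ^ j = α ^ (i + e * j) := by
    intro e i j
    rw [← pow_mul, ← pow_add]
  have hmemcyc : ∀ e i : ℕ, ∀ x : F, x ∈ cyc α e i ↔ ∃ k, k < Q / e ∧ x = α ^ (i + e * k) := by
    intro e i x
    rw [hcyc]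
    simp only [Finset.mem_image, Finset.mem_range]
    constructor
    · rintro ⟨k, hk, hkx⟩
      exact ⟨k, hk, by rw [← hkx, hcycform]⟩
    · rintro ⟨k, hk, rfl⟩
      exact ⟨k, hk, hcycform e i k⟩
  have hzero_not_cyc : ∀ e i : ℕ, (0:F) ∉ cyc α e i := by
    intro e i h0
    rw [hmemcyc] at h0
    obtain ⟨k, _, hk⟩ := h0
    exact pow_ne_zero _ hα0 hk.symm
  have hcycinj : ∀ e i : ℕ, e ∣ Q → 0 < e →
      Set.InjOn (fun j => α ^ i * (α ^ e) ^ j) (Finset.range (Q/e)) := by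
    intro e i he he0 j hj j' hj' h
    simp only [Finset.coe_range, Set.mem_Iio] at hj hj'
    simp only at h
    rw [hcycform, hcycform] at h
    have h2 := (hpe _ _).mp h
    have h3 : (e*j) % Q = (e*j') % Q := Nat.ModEq.add_left_cancel' i h2
    have hj1 : e * j < Q := by
      have := (Nat.mul_lt_mul_left he0).mpr hj
      rwa [Nat.mul_div_cancel' he] at this
    have hj2 : e * j' < Q := by
      have := (Nat.mul_lt_mul_left he0).mpr hj'
      rwa [Nat.mul_div_cancel' he] at this
    rw [Nat.mod_eq_of_lt hj1, Nat.mod_eq_of_lt hj2] at h3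
    exact Nat.eq_of_mul_eq_mul_left he0 h3
  have hcyccard : ∀ e i : ℕ, e ∣ Q → 0 < e → (cyc α e i).card = Q / e := by
    intro e i he he0
    rw [hcyc, Finset.card_image_of_injOn (hcycinj e i he he0), Finset.card_range]
  -- membership with exponents: α ^ t ∈ cyc α e (t % e)  for e ∣ Q, t < Q
  have hmemexp : ∀ e t : ℕ, e ∣ Q → 0 < e → t < Q → α ^ t ∈ cyc α e (t % e) := by
    intro e t he he0 ht
    rw [hmemcyc]
    refine ⟨t / e, ?_, ?_⟩
    · exact Nat.div_lt_div_of_lt_of_dvd he ht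
    · rw [Nat.mod_add_div t e]
  -- disjointness of classes
  have hdisj : ∀ j j' : ℕ, j < N₁ → j' < N₁ → j ≠ j' →
      ∀ x : F, x ∈ cyc α N₁ j → x ∈ cyc α N₁ j' → False := by
    intro j j' hj hj' hne x hx hx'
    rw [hmemcyc] at hx hx'
    obtain ⟨k, hk, rfl⟩ := hx
    obtain ⟨k', hk', he⟩ := hx'
    have h2 := (hpe _ _).mp he
    have h3 : (j + N₁ * k) ≡ (j' + N₁ * k') [MOD N₁] := Nat.ModEq.of_dvd hN₁Q h2
    have a1 : (j + N₁ * k) % N₁ = j % N₁ := Nat.add_mul_mod_self_left j N₁ k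
    have a2 : (j' + N₁ * k') % N₁ = j' % N₁ := Nat.add_mul_mod_self_left j' N₁ k'
    unfold Nat.ModEq at h3
    rw [a1, a2, Nat.mod_eq_of_lt hj, Nat.mod_eq_of_lt hj'] at h3
    exact hne h3
  -- prime field scalars
  set β : F := α ^ s with hβdef
  have hβord : orderOf β = p - 1 := by
    rw [hβdef, hordd s (Dvd.intro (p-1) hsQ.symm) hs0]
    rw [hsQ]
    exact Nat.mul_div_cancel_left _ hs0
  have hβ0 : β ≠ 0 := pow_ne_zero _ hα0
  have hpowinjgen : ∀ (x : F) (hx : x ≠ 0) (v v' : ℕ), v < orderOf x → v' < orderOf x →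
      x ^ v = x ^ v' → v = v' := by
    intro x hx v v' hv hv' h
    have hord : orderOf (Units.mk0 x hx) = orderOf x := by
      rw [← orderOf_units]
      rfl
    have hu := pow_eq_pow_iff_modEq (x := Units.mk0 x hx) (n := v) (m := v')
    rw [hord] at hu
    have h2 : v ≡ v' [MOD orderOf x] := hu.mp (Units.ext (by simpa using h))
    unfold Nat.ModEq at h2
    rwa [Nat.mod_eq_of_lt hv, Nat.mod_eq_of_lt hv'] at h2
  have hβscalar : ∀ u : ℕ, ∃ y : ZMod p, y ≠ 0 ∧ algebraMap (ZMod p) F y = β ^ u := by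
    have hpinj : Function.Injective (algebraMap (ZMod p) F) := RingHom.injective _
    set S1 : Finset F := Finset.univ.image
      (fun y : (ZMod p)ˣ => algebraMap (ZMod p) F (y : ZMod p)) with hS1
    set S2 : Finset F := (Finset.range (p-1)).image (fun v => β ^ v) with hS2
    have hS1card : S1.card = p - 1 := by
      rw [hS1, Finset.card_image_of_injective _
        (fun y y' hyy => Units.ext (hpinj hyy)), Finset.card_univ, ZMod.card_units]
    have hβinj : Set.InjOn (fun v => β ^ v) (Finset.range (p-1)) := by
      intro v hv v' hv' h
      simp only [Finset.coe_range, Set.mem_Iio] at hv hv'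
      exact hpowinjgen β hβ0 v v' (hβord ▸ hv) (hβord ▸ hv') h
    have hS2card : S2.card = p - 1 := by
      rw [hS2, Finset.card_image_of_injOn hβinj, Finset.card_range]
    have hsub : S1 ⊆ S2 := by
      intro x hx
      rw [hS1, Finset.mem_image] at hx
      obtain ⟨y, _, rfl⟩ := hx
      have hx0 : (algebraMap (ZMod p) F (y : ZMod p)) ≠ 0 := by
        intro h0
        exact y.ne_zero (hpinj (by simpa using h0))
      have hx1 : (algebraMap (ZMod p) F (y : ZMod p)) ^ (p-1) = 1 := by
        rw [← map_pow, ZMod.pow_card_sub_one_eq_one y.ne_zero, map_one]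
      obtain ⟨t, htQ, hteq⟩ := hlog _ hx0
      have hdvd : Q ∣ t * (p-1) := by
        rw [← hα]
        apply orderOf_dvd_of_pow_eq_one
        rw [pow_mul, ← hteq, hx1]
      have hst : s ∣ t := by
        rw [hsQ] at hdvd
        exact (Nat.mul_dvd_mul_iff_right (by omega : 0 < p - 1)).mp hdvd
      rw [hS2, Finset.mem_image]
      refine ⟨t / s, Finset.mem_range.mpr ?_, ?_⟩
      · apply Nat.div_lt_of_lt_mul
        rw [← hsQ]
        exact htQ
      · rw [hβdef, ← pow_mul, Nat.mul_div_cancel' hst, ← hteq]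
    have hS2S1 : S2 = S1 := (Finset.eq_of_subset_of_card_le hsub (by omega)).symm
    intro u
    have hmem : β ^ u ∈ S2 := by
      rw [hS2, Finset.mem_image]
      refine ⟨u % (p-1), Finset.mem_range.mpr (Nat.mod_lt _ (by omega)), ?_⟩
      conv_lhs => rw [← hβord]
      rw [pow_mod_orderOf]
    rw [hS2S1, hS1, Finset.mem_image] at hmem
    obtain ⟨y, _, hy⟩ := hmem
    exact ⟨(y : ZMod p), y.ne_zero, hy⟩
  -- the counting lemma, specialised
  have hcount : ∀ c : ℕ, N₁ ∣ c →
      (((Finset.range (p-1) ×ˢ Finset.range n₁).filter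
        (fun ui => (s * ui.1 + N * ui.2) % Q = c % Q)).card) * N = (p-1) * N₁ := by
    intro c hc
    rw [hn₁Q]
    exact count_lemma p Q s N N₁ (by omega) hQ0 hsQ hNQ hN0 hN₁' c hc
  set P : Finset (ℕ × ℕ) := Finset.range (p-1) ×ˢ Finset.range n₁ with hPdef
  set d : ℕ := ((P.filter (fun ui => (s * ui.1 + N * ui.2) % Q = 0 % Q)).card) with hddef
  have hdN : d * N = (p-1) * N₁ := hcount 0 (dvd_zero _)
  have hd0 : 0 < d := by
    rcases Nat.eq_zero_or_pos d with h | h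
    · rw [h, zero_mul] at hdN
      have : 0 < (p-1) * N₁ := Nat.mul_pos (by omega) hN₁0
      omega
    · exact h
  have hcount' : ∀ c : ℕ, N₁ ∣ c →
      ((P.filter (fun ui => (s * ui.1 + N * ui.2) % Q = c % Q)).card) = d := by
    intro c hc
    have h1 := hcount c hc
    have h2 := hdN
    exact Nat.eq_of_mul_eq_mul_right hN0 (by omega)
  -- the covering map
  set g : ℕ × ℕ → F := fun ui => (α ^ s) ^ ui.1 * (α ^ N) ^ ui.2 with hgdef
  have hgval : ∀ ui : ℕ × ℕ, g ui = α ^ (s * ui.1 + N * ui.2) := by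
    intro ui
    rw [hgdef]
    simp only
    rw [← pow_mul, ← pow_mul, ← pow_add]
  have hfiber : ∀ w ∈ cyc α N₁ 0, (P.filter (fun ui => g ui = w)).card = d := by
    intro w hw
    rw [hmemcyc] at hw
    obtain ⟨k, hk, rfl⟩ := hw
    have hfc : P.filter (fun ui => g ui = α ^ (0 + N₁ * k))
        = P.filter (fun ui => (s * ui.1 + N * ui.2) % Q = (N₁ * k) % Q) := by
      apply Finset.filter_congr
      intro ui _
      rw [hgval, zero_add]
      exact hpe _ _
    rw [hfc]
    exact hcount' (N₁ * k) ⟨k, rfl⟩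
  have himage : P.image g = cyc α N₁ 0 := by
    apply Finset.Subset.antisymm
    · intro x hx
      rw [Finset.mem_image] at hx
      obtain ⟨ui, hui, rfl⟩ := hx
      rw [hgval]
      set T := s * ui.1 + N * ui.2 with hT
      have hdvdT : N₁ ∣ T := Dvd.dvd.add (hN₁s.mul_right _) (hN₁N.mul_right _)
      have h1 : α ^ T = α ^ (T % Q) := by
        rw [hpe, Nat.mod_mod_of_dvd _ (dvd_refl Q)]
      have hdvd2 : N₁ ∣ T % Q := (Nat.dvd_mod_iff hN₁Q).mpr hdvdT
      rw [h1, hmemcyc]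
      refine ⟨(T % Q) / N₁, Nat.div_lt_div_of_lt_of_dvd hN₁Q (Nat.mod_lt _ hQ0), ?_⟩
      rw [zero_add, Nat.mul_div_cancel' hdvd2]
    · intro w hw
      have hpos := hfiber w hw
      have hne : (P.filter (fun ui => g ui = w)).Nonempty := by
        rw [← Finset.card_pos, hpos]
        exact hd0
      obtain ⟨ui, hui⟩ := hne
      rw [Finset.mem_filter] at hui
      rw [Finset.mem_image]
      exact ⟨ui, hui.1, hui.2⟩
  -- translation lemma
  have htrans : ∀ j : ℕ, ∀ a ∈ cyc α N₁ j,
      ∑ w ∈ cyc α N₁ 0, psi p (a * w) = gp p α N₁ j := by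
    intro j a ha
    have ha0 : a ≠ 0 := fun h => hzero_not_cyc N₁ j (h ▸ ha)
    have hQN₁ : 0 < Q / N₁ := Nat.div_pos (Nat.le_of_dvd hQ0 hN₁Q) hN₁0
    have himg : (cyc α N₁ 0).image (fun w => a * w) = cyc α N₁ j := by
      apply Finset.eq_of_subset_of_card_le
      · intro x hx
        rw [Finset.mem_image] at hx
        obtain ⟨w, hw, rfl⟩ := hx
        rw [hmemcyc] at hw ha
        obtain ⟨k, hk, rfl⟩ := hw
        obtain ⟨l, hl, rfl⟩ := ha
        rw [hmemcyc]
        refine ⟨(l + k) % (Q / N₁), Nat.mod_lt _ hQN₁, ?_⟩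
        rw [← pow_add, hpe]
        have e : (N₁ * (l+k)) % Q = (N₁ * ((l+k) % (Q/N₁))) % Q := by
          conv_lhs => rw [← Nat.div_add_mod (l+k) (Q/N₁)]
          rw [Nat.mul_add, ← Nat.mul_assoc, Nat.mul_div_cancel' hN₁Q, Nat.mul_add_mod]
        have e2 : (j + N₁ * l + (0 + N₁ * k)) = j + N₁ * (l + k) := by ring
        rw [e2]
        exact Nat.ModEq.add_left j e
      · rw [hcyccard N₁ j hN₁Q hN₁0,
          Finset.card_image_of_injective _ (mul_right_injective₀ ha0),
          hcyccard N₁ 0 hN₁Q hN₁0]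
    unfold gp
    rw [← himg, Finset.sum_image (fun x _ y _ h => mul_left_cancel₀ ha0 h)]
  -- notation
  set HF : Finset F := Finset.univ.filter (fun t : F => t ∈ H) with hHFdef
  set E : Finset F := HF.erase 0 with hEdef
  set θ : F := α ^ N with hθdef
  set cardC : ℕ := ((Finset.range n₁).filter
        (fun i => ∀ a ∈ H, Algebra.trace (ZMod p) F (a * θ ^ i) = 0)).card with hcardCdef
  set G : ℂ := ∑ j ∈ Finset.range N₁,
      ((Finset.univ.filter (fun x : F => x ∈ H ∧ x ∈ cyc α N₁ j)).card : ℂ) * gp p α N₁ j with hGdef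
  set B : ℂ := ∑ a ∈ E, ∑ i ∈ Finset.range n₁, psi p (a * θ ^ i) with hBdef
  -- equation 1
  have eq1 : ((p:ℂ))^r * (cardC : ℂ) = (n₁ : ℂ) + B := by
    have h1 : ∀ i ∈ Finset.range n₁, ∑ a ∈ HF, psi p (a * θ ^ i)
        = if (∀ a ∈ H, Algebra.trace (ZMod p) F (a * θ ^ i) = 0) then ((p:ℂ))^r else 0 := by
      intro i _
      exact charSum p H r hH (θ ^ i)
    have h2 : ∑ i ∈ Finset.range n₁, ∑ a ∈ HF, psi p (a * θ ^ i) = ((p:ℂ))^r * cardC := by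
      rw [Finset.sum_congr rfl h1, ← Finset.sum_filter, Finset.sum_const, nsmul_eq_mul]
      rw [hcardCdef]
      ring
    have h3 : ∑ i ∈ Finset.range n₁, ∑ a ∈ HF, psi p (a * θ ^ i)
        = ∑ a ∈ HF, ∑ i ∈ Finset.range n₁, psi p (a * θ ^ i) := Finset.sum_comm
    have h0HF : (0:F) ∈ HF := by rw [hHFdef]; simp [H.zero_mem]
    have h4 : ∑ a ∈ HF, ∑ i ∈ Finset.range n₁, psi p (a * θ ^ i)
        = (∑ i ∈ Finset.range n₁, psi p ((0:F) * θ ^ i)) + B := by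
      rw [hBdef, hEdef]
      exact (Finset.add_sum_erase _ _ h0HF).symm
    have h5 : (∑ i ∈ Finset.range n₁, psi p ((0:F) * θ ^ i)) = (n₁:ℂ) := by
      have hone : ∀ i ∈ Finset.range n₁, psi p ((0:F) * θ ^ i) = 1 := by
        intro i _
        rw [zero_mul, psi_zero]
      rw [Finset.sum_congr rfl hone, Finset.sum_const, nsmul_eq_mul, mul_one, Finset.card_range]
    rw [← h2, h3, h4, h5]
  -- partition step
  have hpartsum : ∑ a ∈ E, (∑ w ∈ cyc α N₁ 0, psi p (a * w)) = G := by
    have hbi : E = (Finset.range N₁).biUnion (fun j => HF ∩ cyc α N₁ j) := by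
      ext x
      simp only [hEdef, Finset.mem_erase, Finset.mem_biUnion, Finset.mem_range, Finset.mem_inter]
      constructor
      · rintro ⟨hx0, hxH⟩
        have hxH' : x ∈ HF := hxH
        obtain ⟨t, htQ, rfl⟩ := hlog x hx0
        exact ⟨t % N₁, Nat.mod_lt _ hN₁0, hxH', hmemexp N₁ t hN₁Q hN₁0 htQ⟩
      · rintro ⟨j, hj, hxH, hxc⟩
        refine ⟨?_, hxH⟩
        intro h0
        exact hzero_not_cyc N₁ j (h0 ▸ hxc)
    rw [hbi, Finset.sum_biUnion ?hdisjoint]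
    case hdisjoint =>
      intro j hj j' hj' hne
      simp only [Finset.coe_range, Set.mem_Iio] at hj hj'
      simp only [Function.onFun]
      apply Finset.disjoint_left.mpr
      intro x hx hx'
      exact hdisj j j' hj hj' hne x (Finset.mem_inter.mp hx).2 (Finset.mem_inter.mp hx').2
    rw [hGdef]
    apply Finset.sum_congr rfl
    intro j hj
    have hconst : ∀ a ∈ HF ∩ cyc α N₁ j, (∑ w ∈ cyc α N₁ 0, psi p (a * w)) = gp p α N₁ j := by
      intro a ha
      exact htrans j a (Finset.mem_inter.mp ha).2
    rw [Finset.sum_congr rfl hconst, Finset.sum_const, nsmul_eq_mul]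
    have hceq : HF ∩ cyc α N₁ j = Finset.univ.filter (fun x : F => x ∈ H ∧ x ∈ cyc α N₁ j) := by
      ext x
      rw [hHFdef]
      simp only [Finset.mem_inter, Finset.mem_filter, Finset.mem_univ, true_and]
    rw [hceq]
  -- equation 2
  have eq2 : (((p-1 : ℕ)):ℂ) * B = (d:ℂ) * G := by
    have hstep : ∀ u ∈ Finset.range (p-1),
        B = ∑ a ∈ E, ∑ i ∈ Finset.range n₁, psi p ((β ^ u * a) * θ ^ i) := by
      intro u _
      obtain ⟨y, hy0, hyeq⟩ := hβscalar u
      have hβu0 : β ^ u ≠ 0 := pow_ne_zero _ hβ0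
      rw [hBdef]
      apply Finset.sum_nbij' (fun b => (β ^ u)⁻¹ * b) (fun b => β ^ u * b)
      · intro a ha
        rw [hEdef, Finset.mem_erase, hHFdef, Finset.mem_filter] at ha ⊢
        refine ⟨?_, Finset.mem_univ _, ?_⟩
        · intro h0
          exact ha.1 (by
            have := congrArg (fun t => β ^ u * t) h0
            simpa [mul_inv_cancel_left₀ hβu0] using this)
        · have hyinv : algebraMap (ZMod p) F y⁻¹ = (β ^ u)⁻¹ := by
            rw [map_inv₀, hyeq]
          rw [← hyinv, ← Algebra.smul_def]
          exact H.smul_mem _ ha.2.2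
      · intro a ha
        rw [hEdef, Finset.mem_erase, hHFdef, Finset.mem_filter] at ha ⊢
        refine ⟨mul_ne_zero hβu0 ha.1, Finset.mem_univ _, ?_⟩
        rw [← hyeq, ← Algebra.smul_def]
        exact H.smul_mem _ ha.2.2
      · intro a _
        rw [mul_inv_cancel_left₀ hβu0]
      · intro a _
        rw [inv_mul_cancel_left₀ hβu0]
      · intro a _
        apply Finset.sum_congr rfl
        intro i _
        rw [mul_inv_cancel_left₀ hβu0]
    have hsum1 : (((p-1:ℕ)):ℂ) * B
        = ∑ u ∈ Finset.range (p-1), ∑ a ∈ E, ∑ i ∈ Finset.range n₁,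
            psi p ((β ^ u * a) * θ ^ i) := by
      calc (((p-1:ℕ)):ℂ) * B = ∑ _u ∈ Finset.range (p-1), B := by
            rw [Finset.sum_const, nsmul_eq_mul, Finset.card_range]
        _ = _ := Finset.sum_congr rfl hstep
    have hswap : ∑ u ∈ Finset.range (p-1), ∑ a ∈ E, ∑ i ∈ Finset.range n₁,
            psi p ((β ^ u * a) * θ ^ i)
        = ∑ a ∈ E, ∑ u ∈ Finset.range (p-1), ∑ i ∈ Finset.range n₁,
            psi p ((β ^ u * a) * θ ^ i) := Finset.sum_comm
    have hprod : ∀ a : F, ∑ u ∈ Finset.range (p-1), ∑ i ∈ Finset.range n₁,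
            psi p ((β ^ u * a) * θ ^ i)
        = ∑ ui ∈ P, psi p (a * g ui) := by
      intro a
      rw [hPdef, Finset.sum_product]
      apply Finset.sum_congr rfl
      intro u _
      apply Finset.sum_congr rfl
      intro i _
      have hg : g (u, i) = β ^ u * θ ^ i := rfl
      rw [hg]
      congr 1
      ring
    have hcomp : ∀ a : F, ∑ ui ∈ P, psi p (a * g ui)
        = (d:ℂ) * ∑ w ∈ cyc α N₁ 0, psi p (a * w) := by
      intro a
      rw [Finset.sum_comp (fun w => psi p (a * w)) g, himage, Finset.mul_sum]
      apply Finset.sum_congr rfl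
      intro w hw
      rw [hfiber w hw, nsmul_eq_mul]
    calc (((p-1:ℕ)):ℂ) * B
        = ∑ a ∈ E, ∑ u ∈ Finset.range (p-1), ∑ i ∈ Finset.range n₁,
            psi p ((β ^ u * a) * θ ^ i) := by rw [hsum1, hswap]
      _ = ∑ a ∈ E, ∑ ui ∈ P, psi p (a * g ui) := Finset.sum_congr rfl (fun a _ => hprod a)
      _ = ∑ a ∈ E, (d:ℂ) * ∑ w ∈ cyc α N₁ 0, psi p (a * w) :=
            Finset.sum_congr rfl (fun a _ => hcomp a)
      _ = (d:ℂ) * ∑ a ∈ E, ∑ w ∈ cyc α N₁ 0, psi p (a * w) := by rw [Finset.mul_sum]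
      _ = (d:ℂ) * G := by rw [hpartsum]
  -- final algebra
  have hpC : ((p:ℂ)) ≠ 0 := Nat.cast_ne_zero.mpr (by omega)
  have hprC : ((p:ℂ))^r ≠ 0 := pow_ne_zero _ hpC
  have hNC : ((N:ℂ)) ≠ 0 := Nat.cast_ne_zero.mpr hN0.ne'
  have hp1C : (((p-1:ℕ)):ℂ) ≠ 0 := Nat.cast_ne_zero.mpr (by omega)
  have eq3 : (d:ℂ) * (N:ℂ) = (((p-1:ℕ)):ℂ) * (N₁:ℂ) := by
    exact_mod_cast congrArg (Nat.cast : ℕ → ℂ) hdN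
  have eq4 : B * (N:ℂ) = (N₁:ℂ) * G := by
    apply mul_left_cancel₀ hp1C
    linear_combination (N:ℂ) * eq2 + G * eq3
  field_simp
  linear_combination (N:ℂ) * eq1 + eq4
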